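/- Let ρ_{ε,r} = (1−ε)|+_r⟩⟨+_r| + ε I/(d_A d_B) where |+_r⟩ = (1/√r)∑_{i<r}|ii⟩. If r ≤ √d_A and ε < 1/2 then the Schmidt number of ρ_{ε,r} equals r. -/

import Mathlib

open Matrix Module

set_option maxHeartbeats 1000000

/-- `ρ` has Schmidt number at most `m`: it is a nonnegative combination of pure states
each of Schmidt rank at most `m` (the Schmidt rank of a pure state being the rank of
the matrix of its coefficients). -/
noncomputable def HasSchmidtNumberLE (dA dB : ℕ)
    (ρ : Matrix (Fin dA × Fin dB) (Fin dA × Fin dB) ℂ) (m : ℕ) : Prop :=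
  ∃ (n : ℕ) (c : Fin n → ℝ) (v : Fin n → (Fin dA × Fin dB → ℂ)),
    (∀ i, 0 ≤ c i) ∧
    ρ = ∑ i, ((c i : ℂ)) • Matrix.vecMulVec (v i) (star (v i)) ∧
    ∀ i, (Matrix.of fun a b => v i (a, b)).rank ≤ m

/-- The Schmidt number of a mixed state. -/
noncomputable def schmidtNumber (dA dB : ℕ)
    (ρ : Matrix (Fin dA × Fin dB) (Fin dA × Fin dB) ℂ) : ℕ :=
  sInf {m | HasSchmidtNumberLE dA dB ρ m}

/-- The rank-`r` maximally entangled state `|+_r⟩ = (1/√r) ∑_{i<r} |ii⟩`. -/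
noncomputable def plusState (dA dB r : ℕ) : Fin dA × Fin dB → ℂ :=
  fun p => if (p.1 : ℕ) = (p.2 : ℕ) ∧ (p.1 : ℕ) < r then (1 / Real.sqrt r : ℝ) else 0


lemma trace_sq_le_rank_mul {n : ℕ} (A : Matrix (Fin n) (Fin n) ℂ) :
    ‖A.trace‖ ^ 2 ≤ (A.rank : ℝ) * ∑ i, ∑ j, ‖A i j‖ ^ 2 := by
  classical
  set E := EuclideanSpace ℂ (Fin n)
  let b : Basis (Fin n) ℂ E := PiLp.basisFun 2 ℂ (Fin n)
  let T : E →ₗ[ℂ] E := Matrix.toLin b b A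
  let U : Submodule ℂ E := LinearMap.range T
  let P : E →ₗ[ℂ] E := (U.subtypeL.comp (U.orthogonalProjectionOnto) : E →L[ℂ] E)
  have hPmem : ∀ x : E, P x ∈ U := fun x => (U.orthogonalProjectionOnto x).2
  have hPid : ∀ x ∈ U, P x = x := fun x hx => by
    show (U.orthogonalProjectionOnto x : E) = x
    exact Submodule.starProjection_eq_self_iff.2 hx
  have hproj : LinearMap.IsProj U P := ⟨hPmem, hPid⟩
  have hsym : ∀ x y : E, inner ℂ (P x) y = (inner ℂ x (P y) : ℂ) :=
    Submodule.starProjection_isSymmetric U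
  let Pm : Matrix (Fin n) (Fin n) ℂ := LinearMap.toMatrix b b P
  have hPA : Pm * A = A := by
    have hcomp : P ∘ₗ T = T := LinearMap.ext fun x => hPid (T x) (LinearMap.mem_range_self T x)
    calc Pm * A = LinearMap.toMatrix b b (P ∘ₗ T) := by
          rw [LinearMap.toMatrix_comp b b b, LinearMap.toMatrix_toLin]
      _ = A := by rw [hcomp, LinearMap.toMatrix_toLin]
  have hPm_apply : ∀ i j, Pm i j = (P (b j)) i := fun i j => by
    simp only [Pm, LinearMap.toMatrix_apply]; rfl
  have hinner : ∀ (y : E) (i : Fin n), (inner ℂ (b i) y : ℂ) = y i := fun y i => by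
    rw [show b i = (PiLp.basisFun 2 ℂ (Fin n)) i from rfl, PiLp.basisFun_apply,
      PiLp.inner_apply]
    simp [Pi.single_apply, apply_ite (starRingEnd ℂ)]
  have hherm : ∀ i j, Pm i j = (starRingEnd ℂ) (Pm j i) := by
    intro i j
    rw [hPm_apply, hPm_apply, ← hinner (P (b j)) i, ← hinner (P (b i)) j]
    rw [← hsym (b i) (b j), ← inner_conj_symm]
  have hPP : Pm * Pm = Pm := by
    have hcomp : P ∘ₗ P = P := LinearMap.ext fun x => hPid (P x) (hPmem x)
    calc Pm * Pm = LinearMap.toMatrix b b (P ∘ₗ P) := by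
          rw [LinearMap.toMatrix_comp b b b]
      _ = Pm := by rw [hcomp]
  have htr : Pm.trace = (A.rank : ℂ) := by
    have h1 : LinearMap.trace ℂ E P = (finrank ℂ U : ℂ) := hproj.trace
    have h2 : A.rank = finrank ℂ U := Matrix.rank_eq_finrank_range_toLin A b b
    rw [LinearMap.trace_eq_matrix_trace ℂ b P] at h1
    rw [h2]; exact h1
  have hfroC : (Pm * Pm).trace = ((∑ i, ∑ j, ‖Pm i j‖ ^ 2 : ℝ) : ℂ) := by
    rw [Matrix.trace]
    simp only [Matrix.diag_apply, Matrix.mul_apply]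
    push_cast
    refine Finset.sum_congr rfl fun i _ => Finset.sum_congr rfl fun j _ => ?_
    rw [hherm j i, Complex.mul_conj']
  have hfro : ∑ i, ∑ j, ‖Pm i j‖ ^ 2 = (A.rank : ℝ) := by
    have : ((∑ i, ∑ j, ‖Pm i j‖ ^ 2 : ℝ) : ℂ) = (A.rank : ℂ) := by
      rw [← hfroC, hPP, htr]
    exact_mod_cast this
  have htrA : A.trace = ∑ i, ∑ j, Pm i j * A j i := by
    conv_lhs => rw [← hPA]
    rw [Matrix.trace]
    simp only [Matrix.diag_apply, Matrix.mul_apply]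
  have h1 : ‖A.trace‖ ≤ ∑ i, ∑ j, ‖Pm i j‖ * ‖A j i‖ := by
    rw [htrA]
    refine (norm_sum_le _ _).trans ?_
    refine Finset.sum_le_sum fun i _ => ?_
    refine (norm_sum_le _ _).trans ?_
    exact Finset.sum_le_sum fun j _ => le_of_eq (norm_mul _ _)
  have h2 : (∑ i, ∑ j, ‖Pm i j‖ * ‖A j i‖) ^ 2 ≤
      (∑ i, ∑ j, ‖Pm i j‖ ^ 2) * ∑ i, ∑ j, ‖A j i‖ ^ 2 := by
    have key := Finset.sum_mul_sq_le_sq_mul_sq Finset.univ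
      (fun p : Fin n × Fin n => ‖Pm p.1 p.2‖) (fun p : Fin n × Fin n => ‖A p.2 p.1‖)
    have e1 : (∑ p : Fin n × Fin n, ‖Pm p.1 p.2‖ * ‖A p.2 p.1‖)
        = ∑ i, ∑ j, ‖Pm i j‖ * ‖A j i‖ := Fintype.sum_prod_type _
    have e2 : (∑ p : Fin n × Fin n, ‖Pm p.1 p.2‖ ^ 2)
        = ∑ i, ∑ j, ‖Pm i j‖ ^ 2 := Fintype.sum_prod_type _
    have e3 : (∑ p : Fin n × Fin n, ‖A p.2 p.1‖ ^ 2)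
        = ∑ i, ∑ j, ‖A j i‖ ^ 2 := Fintype.sum_prod_type _
    rw [e1, e2, e3] at key
    exact key
  have h3 : (∑ i, ∑ j, ‖A j i‖ ^ 2 : ℝ) = ∑ i, ∑ j, ‖A i j‖ ^ 2 := Finset.sum_comm
  have h4 : ‖A.trace‖ ^ 2 ≤ (∑ i, ∑ j, ‖Pm i j‖ * ‖A j i‖) ^ 2 :=
    pow_le_pow_left₀ (norm_nonneg _) h1 2
  calc ‖A.trace‖ ^ 2 ≤ (∑ i, ∑ j, ‖Pm i j‖ ^ 2) * ∑ i, ∑ j, ‖A j i‖ ^ 2 := h4.trans h2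
    _ = (A.rank : ℝ) * ∑ i, ∑ j, ‖A i j‖ ^ 2 := by rw [hfro, h3]

lemma rank_submatrix_le' {m n r s : ℕ} (A : Matrix (Fin m) (Fin n) ℂ)
    (f : Fin r → Fin m) (g : Fin s → Fin n) :
    (A.submatrix f g).rank ≤ A.rank := by
  classical
  let P : Matrix (Fin r) (Fin m) ℂ := Matrix.of fun j a => if a = f j then 1 else 0
  let Q : Matrix (Fin n) (Fin s) ℂ := Matrix.of fun b k => if b = g k then 1 else 0
  have hPA : P * A * Q = A.submatrix f g := by
    ext j k
    simp only [Matrix.mul_apply, Matrix.submatrix_apply, P, Q, Matrix.of_apply]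
    rw [Finset.sum_eq_single (g k)]
    · rw [Finset.sum_eq_single (f j)] <;> simp +contextual
    · intro b _ hb; simp [hb]
    · simp
  calc (A.submatrix f g).rank = (P * A * Q).rank := by rw [hPA]
    _ ≤ (P * A).rank := Matrix.rank_mul_le_left _ _
    _ ≤ A.rank := Matrix.rank_mul_le_right _ _

/-- Sum over the `r`-truncated diagonal. -/
lemma sum_diag_ite {M : Type*} [AddCommMonoid M] {dA dB r : ℕ} (hra : r ≤ dA) (hrb : r ≤ dB)
    (f : Fin dA × Fin dB → M) :
    (∑ p : Fin dA × Fin dB, if ((p.1 : ℕ) = (p.2 : ℕ) ∧ (p.1 : ℕ) < r) then f p else 0)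
      = ∑ j : Fin r, f (Fin.castLE hra j, Fin.castLE hrb j) := by
  classical
  rw [← Finset.sum_filter]
  let emb : Fin r ↪ Fin dA × Fin dB :=
    ⟨fun j => (Fin.castLE hra j, Fin.castLE hrb j), by
      intro a b h
      exact Fin.ext (congrArg (fun p : Fin dA × Fin dB => (p.1 : ℕ)) h)⟩
  have hset : (Finset.univ.filter
      (fun p : Fin dA × Fin dB => (p.1 : ℕ) = (p.2 : ℕ) ∧ (p.1 : ℕ) < r))
      = Finset.univ.map emb := by
    ext p
    simp only [Finset.mem_filter, Finset.mem_univ, true_and, Finset.mem_map,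
      Function.Embedding.coeFn_mk, emb]
    constructor
    · rintro ⟨h1, h2⟩
      exact ⟨⟨(p.1 : ℕ), h2⟩, Prod.ext (Fin.ext rfl) (Fin.ext h1)⟩
    · rintro ⟨j, rfl⟩
      exact ⟨rfl, j.isLt⟩
  rw [hset, Finset.sum_map]
  rfl

lemma sum_box_ite {M : Type*} [AddCommMonoid M] {dA dB r : ℕ} (hra : r ≤ dA) (hrb : r ≤ dB)
    (f : Fin dA × Fin dB → M) :
    (∑ p : Fin dA × Fin dB, if ((p.1 : ℕ) < r ∧ (p.2 : ℕ) < r) then f p else 0)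
      = ∑ q : Fin r × Fin r, f (Fin.castLE hra q.1, Fin.castLE hrb q.2) := by
  classical
  rw [← Finset.sum_filter]
  let emb : Fin r × Fin r ↪ Fin dA × Fin dB :=
    ⟨fun q => (Fin.castLE hra q.1, Fin.castLE hrb q.2), by
      intro a b h
      have h1 := congrArg (fun p : Fin dA × Fin dB => (p.1 : ℕ)) h
      have h2 := congrArg (fun p : Fin dA × Fin dB => (p.2 : ℕ)) h
      exact Prod.ext (Fin.ext h1) (Fin.ext h2)⟩
  have hset : (Finset.univ.filter
      (fun p : Fin dA × Fin dB => (p.1 : ℕ) < r ∧ (p.2 : ℕ) < r))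
      = Finset.univ.map emb := by
    ext p
    simp only [Finset.mem_filter, Finset.mem_univ, true_and, Finset.mem_map,
      Function.Embedding.coeFn_mk, emb]
    constructor
    · rintro ⟨h1, h2⟩
      exact ⟨(⟨(p.1 : ℕ), h1⟩, ⟨(p.2 : ℕ), h2⟩), Prod.ext (Fin.ext rfl) (Fin.ext rfl)⟩
    · rintro ⟨q, rfl⟩
      exact ⟨q.1.isLt, q.2.isLt⟩
  rw [hset, Finset.sum_map]
  rfl

lemma functional_decomp {ι κ : Type*} [Fintype ι] [Fintype κ]
    (a b : ι → ℂ) (c : κ → ℂ) (v : κ → ι → ℂ) :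
    (∑ p, ∑ q, a p * (∑ i, c i * (v i p * (starRingEnd ℂ) (v i q))) * b q)
      = ∑ i, c i * ((∑ p, a p * v i p) * (∑ q, (starRingEnd ℂ) (v i q) * b q)) := by
  have h1 : ∀ p q, a p * (∑ i, c i * (v i p * (starRingEnd ℂ) (v i q))) * b q
      = ∑ i, c i * ((a p * v i p) * ((starRingEnd ℂ) (v i q) * b q)) := by
    intro p q
    rw [Finset.mul_sum, Finset.sum_mul]
    exact Finset.sum_congr rfl fun i _ => by ring
  simp only [h1]
  rw [show (∑ p, ∑ q, ∑ i, c i * ((a p * v i p) * ((starRingEnd ℂ) (v i q) * b q)))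
      = ∑ p, ∑ i, ∑ q, c i * ((a p * v i p) * ((starRingEnd ℂ) (v i q) * b q)) from
    Finset.sum_congr rfl fun p _ => Finset.sum_comm, Finset.sum_comm]
  refine Finset.sum_congr rfl fun i _ => ?_
  rw [Finset.sum_mul_sum, Finset.mul_sum]
  exact Finset.sum_congr rfl fun p _ => by rw [Finset.mul_sum]

lemma functional_pure {ι : Type*} [Fintype ι] (a b w : ι → ℂ) :
    (∑ p, ∑ q, a p * (Matrix.vecMulVec w (star w)) p q * b q)
      = (∑ p, a p * w p) * (∑ q, (starRingEnd ℂ) (w q) * b q) := by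
  rw [Finset.sum_mul_sum]
  refine Finset.sum_congr rfl fun p _ => Finset.sum_congr rfl fun q _ => ?_
  simp only [Matrix.vecMulVec_apply, Pi.star_apply, RCLike.star_def]
  ring

lemma functional_one {ι : Type*} [Fintype ι] [DecidableEq ι] (a b : ι → ℂ) :
    (∑ p, ∑ q, a p * (1 : Matrix ι ι ℂ) p q * b q) = ∑ p, a p * b p := by
  refine Finset.sum_congr rfl fun p _ => ?_
  rw [Finset.sum_eq_single p]
  · simp [Matrix.one_apply]
  · intro q _ hq; simp [Matrix.one_apply, Ne.symm hq]
  · simp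

theorem stmt11 (dA dB r : ℕ) (hr : 0 < r) (hdAdB : dA ≤ dB)
    (hrdA : r * r ≤ dA) (ε : ℝ) (hε0 : 0 ≤ ε) (hε : ε < 1 / 2)
    (ρ : Matrix (Fin dA × Fin dB) (Fin dA × Fin dB) ℂ)
    (hρ : ρ = ((1 - ε : ℝ) : ℂ) • Matrix.vecMulVec (plusState dA dB r) (star (plusState dA dB r))
      + ((ε / (dA * dB) : ℝ) : ℂ) • (1 : Matrix (Fin dA × Fin dB) (Fin dA × Fin dB) ℂ)) :
    schmidtNumber dA dB ρ = r := by
  classical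
  have hmem : HasSchmidtNumberLE dA dB ρ r := by
    classical
    have hra : r ≤ dA := le_trans (Nat.le_mul_of_pos_left r hr) hrdA
    have hrb : r ≤ dB := hra.trans hdAdB
    set E := finProdFinEquiv (m := dA) (n := dB) with hE
    refine ⟨dA * dB + 1,
      Fin.cons (1 - ε) (fun _ => ε / (dA * dB)),
      Fin.cons (plusState dA dB r) (fun k p => if E p = k then 1 else 0), ?_, ?_, ?_⟩
    · intro i
      refine Fin.cases ?_ ?_ i
      · simp only [Fin.cons_zero]; linarith
      · intro k
        simp only [Fin.cons_succ]
        positivity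
    · rw [Fin.sum_univ_succ]
      simp only [Fin.cons_zero, Fin.cons_succ]
      rw [hρ]
      congr 1
      rw [← Finset.smul_sum]
      congr 1
      ext p q
      simp only [Matrix.sum_apply, Matrix.vecMulVec_apply, Pi.star_apply, Matrix.one_apply]
      simp only [apply_ite (starRingEnd ℂ), _root_.map_one, _root_.map_zero, ite_mul, one_mul, zero_mul,
        mul_ite, mul_one, mul_zero]
      rw [Finset.sum_eq_single (E p)]
      · simp only [if_pos rfl, EmbeddingLike.apply_eq_iff_eq]
        by_cases h : q = p
        · subst h; simp
        · simp [h, fun hh : (q = p) => h hh, Ne.symm h]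
      · intro k _ hk
        simp [Ne.symm hk]
      · simp
    · intro i
      refine Fin.cases ?_ ?_ i
      · -- plus state has rank ≤ r
        simp only [Fin.cons_zero]
        let B : Matrix (Fin dA) (Fin r) ℂ :=
          Matrix.of fun a j => if (a : ℕ) = (j : ℕ) then 1 else 0
        let C : Matrix (Fin r) (Fin dB) ℂ :=
          Matrix.of fun j b => if (j : ℕ) = (b : ℕ) then ((1 / Real.sqrt r : ℝ) : ℂ) else 0
        have hBC : (Matrix.of fun a b => plusState dA dB r (a, b)) = B * C := by
          ext a b
          simp only [Matrix.of_apply, Matrix.mul_apply, B, C, plusState]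
          by_cases har : (a : ℕ) < r
          · rw [Finset.sum_eq_single (⟨(a : ℕ), har⟩ : Fin r)]
            · simp [har]
            · intro j _ hj
              have : (a : ℕ) ≠ (j : ℕ) := fun hh => hj (Fin.ext hh.symm)
              simp [this]
            · simp
          · rw [Finset.sum_eq_zero, if_neg (by tauto)]
            intro j _
            have : (a : ℕ) ≠ (j : ℕ) := fun hh => har (hh ▸ j.isLt)
            simp [this]
        rw [hBC]
        calc (B * C).rank ≤ C.rank := Matrix.rank_mul_le_right B C
          _ ≤ Fintype.card (Fin r) := Matrix.rank_le_card_height C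
          _ = r := Fintype.card_fin r
      · intro k
        simp only [Fin.cons_succ]
        let B : Matrix (Fin dA) (Fin 1) ℂ :=
          Matrix.of fun a _ => if a = (E.symm k).1 then 1 else 0
        let C : Matrix (Fin 1) (Fin dB) ℂ :=
          Matrix.of fun _ b => if b = (E.symm k).2 then 1 else 0
        have hBC : (Matrix.of fun a b => (if E (a, b) = k then (1:ℂ) else 0)) = B * C := by
          ext a b
          simp only [Matrix.of_apply, Matrix.mul_apply, B, C, Finset.sum_singleton,
            Fin.sum_univ_one]
          simp only [Equiv.apply_eq_iff_eq_symm_apply]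
          by_cases h1 : a = (E.symm k).1 <;> by_cases h2 : b = (E.symm k).2 <;>
            simp [Prod.ext_iff, h1, h2]
        rw [hBC]
        calc (B * C).rank ≤ B.rank := Matrix.rank_mul_le_left B C
          _ ≤ Fintype.card (Fin 1) := Matrix.rank_le_card_width B
          _ = 1 := Fintype.card_fin 1
          _ ≤ r := hr
  have hlow : ∀ m ∈ {m | HasSchmidtNumberLE dA dB ρ m}, r ≤ m := by
    rintro m ⟨n, c, v, hc, hsum, hrank⟩
    classical
    by_contra hlt
    push_neg at hlt
    have hra : r ≤ dA := le_trans (Nat.le_mul_of_pos_left r hr) hrdA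
    have hrb : r ≤ dB := hra.trans hdAdB
    have hdA0 : 0 < dA := lt_of_lt_of_le (Nat.mul_pos hr hr) hrdA
    have hdB0 : 0 < dB := lt_of_lt_of_le hdA0 hdAdB
    set plus := plusState dA dB r with hplusdef
    have hplus : ∀ p : Fin dA × Fin dB, plus p
        = (((if ((p.1 : ℕ) = (p.2 : ℕ) ∧ (p.1 : ℕ) < r) then (1 / Real.sqrt r) else 0 : ℝ)) : ℂ) := by
      intro p
      rw [hplusdef, plusState]
      split <;> simp
    have hconj_plus : ∀ p, (starRingEnd ℂ) (plus p) = plus p := fun p => by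
      rw [hplus]; exact Complex.conj_ofReal _
    have hr0R : (0:ℝ) < r := by exact_mod_cast hr
    have h1r : (1 / Real.sqrt r) * (1 / Real.sqrt r) = 1 / (r:ℝ) := by
      rw [div_mul_div_comm, one_mul, Real.mul_self_sqrt hr0R.le]
    -- the key scalar quantities
    set t : Fin n → ℂ := fun i => ∑ p, (starRingEnd ℂ) (plus p) * v i p with ht_def
    set Tr : Fin n → ℂ := fun i => ∑ j : Fin r, v i (Fin.castLE hra j, Fin.castLE hrb j) with hTr_def
    set Q : Fin n → ℝ :=
      fun i => ∑ q : Fin r × Fin r, ‖v i (Fin.castLE hra q.1, Fin.castLE hrb q.2)‖ ^ 2 with hQ_def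
    have hQ0 : ∀ i, 0 ≤ Q i := fun i => Finset.sum_nonneg fun q _ => sq_nonneg _
    have ht : ∀ i, t i = ((1 / Real.sqrt r : ℝ) : ℂ) * Tr i := by
      intro i
      have hpt : ∀ p, (starRingEnd ℂ) (plus p) * v i p
          = (if ((p.1 : ℕ) = (p.2 : ℕ) ∧ (p.1 : ℕ) < r)
              then ((1 / Real.sqrt r : ℝ) : ℂ) * v i p else 0) := by
        intro p
        rw [hconj_plus, hplus]
        split <;> simp
      rw [ht_def]
      simp only [hpt]
      rw [sum_diag_ite hra hrb, hTr_def, Finset.mul_sum]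
    -- per-term inequality
    have hper : ∀ i, (r:ℝ) * ‖t i‖ ^ 2 ≤ (m:ℝ) * Q i := by
      intro i
      set Ai : Matrix (Fin r) (Fin r) ℂ :=
        (Matrix.of fun a b => v i (a, b)).submatrix (Fin.castLE hra) (Fin.castLE hrb) with hAi_def
      have hAirank : Ai.rank ≤ m := le_trans (rank_submatrix_le' _ _ _) (hrank i)
      have htrace : Ai.trace = Tr i := by
        simp only [Matrix.trace, Matrix.diag, hAi_def, Matrix.submatrix_apply, Matrix.of_apply,
          hTr_def]
      have hfro : (∑ j, ∑ k, ‖Ai j k‖ ^ 2) = Q i := by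
        rw [hQ_def]
        exact (Fintype.sum_prod_type (f := fun q : Fin r × Fin r =>
          ‖v i (Fin.castLE hra q.1, Fin.castLE hrb q.2)‖ ^ 2)).symm
      have hkey := trace_sq_le_rank_mul Ai
      rw [htrace, hfro] at hkey
      have hnorm : (r:ℝ) * ‖t i‖ ^ 2 = ‖Tr i‖ ^ 2 := by
        rw [ht i, norm_mul, mul_pow, Complex.norm_real, Real.norm_eq_abs,
          abs_of_nonneg (by positivity), pow_two, h1r]
        field_simp
      rw [hnorm]
      calc ‖Tr i‖ ^ 2 ≤ (Ai.rank : ℝ) * Q i := hkey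
        _ ≤ (m:ℝ) * Q i := mul_le_mul_of_nonneg_right (by exact_mod_cast hAirank) (hQ0 i)
    -- matrix entries from the decomposition
    have hρ_entry : ∀ p q, ρ p q = ∑ i, (c i : ℂ) * (v i p * (starRingEnd ℂ) (v i q)) := by
      intro p q
      rw [hsum]
      simp [Matrix.sum_apply, Matrix.vecMulVec_apply, Pi.star_apply, Complex.star_def,
        mul_comm]
    -- useful constant sums
    have hdiag_const : (∑ p : Fin dA × Fin dB,
        if ((p.1 : ℕ) = (p.2 : ℕ) ∧ (p.1 : ℕ) < r) then ((1/(r:ℝ) : ℝ) : ℂ) else 0) = 1 := by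
      rw [sum_diag_ite hra hrb, Finset.sum_const, Finset.card_univ, Fintype.card_fin,
        nsmul_eq_mul]
      have hne : ((r:ℕ):ℂ) ≠ 0 := Nat.cast_ne_zero.mpr hr.ne'
      push_cast
      field_simp [hne]
    have hSplus : (∑ p, (starRingEnd ℂ) (plus p) * plus p) = 1 := by
      have hpt : ∀ p : Fin dA × Fin dB, (starRingEnd ℂ) (plus p) * plus p
          = (if ((p.1 : ℕ) = (p.2 : ℕ) ∧ (p.1 : ℕ) < r) then ((1/(r:ℝ) : ℝ) : ℂ) else 0) := by
        intro p
        rw [hconj_plus, hplus]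
        split
        · rw [← Complex.ofReal_mul, h1r]
        · simp
      simp only [hpt]
      exact hdiag_const
    have ht_apply : ∀ i, t i = ∑ p, (starRingEnd ℂ) (plus p) * v i p := fun i => rfl
    set y : ℝ := ε / ((dA:ℝ) * (dB:ℝ)) with hy_def
    -- the fidelity functional
    set S1 : ℂ := ∑ p, ∑ q, (starRingEnd ℂ) (plus p) * ρ p q * plus q with hS1_def
    have hS1dec : S1 = ((∑ i, c i * ‖t i‖ ^ 2 : ℝ) : ℂ) := by
      rw [hS1_def]
      simp only [hρ_entry]
      rw [functional_decomp]
      have hfac : ∀ i : Fin n, (∑ q, (starRingEnd ℂ) (v i q) * plus q)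
          = (starRingEnd ℂ) (t i) := by
        intro i
        rw [ht_apply i, map_sum]
        refine Finset.sum_congr rfl fun q _ => ?_
        rw [_root_.map_mul, Complex.conj_conj, mul_comm]
      have step : ∀ i : Fin n, (c i : ℂ) * ((∑ p, (starRingEnd ℂ) (plus p) * v i p) *
          (∑ q, (starRingEnd ℂ) (v i q) * plus q))
          = (c i : ℂ) * ((‖t i‖ ^ 2 : ℝ) : ℂ) := by
        intro i
        rw [hfac i, ← ht_apply i, Complex.mul_conj']
        norm_cast
      rw [Finset.sum_congr rfl fun i _ => step i]
      norm_cast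
    have hS1rho : S1 = ((1 - ε : ℝ) : ℂ) + ((y : ℝ) : ℂ) := by
      rw [hS1_def, hρ]
      have hentry : ∀ p q : Fin dA × Fin dB,
          (starRingEnd ℂ) (plus p) * ((((1 - ε : ℝ) : ℂ) • Matrix.vecMulVec plus (star plus)
            + ((y : ℝ) : ℂ) • (1 : Matrix (Fin dA × Fin dB) (Fin dA × Fin dB) ℂ)) p q) * plus q
          = ((1 - ε : ℝ) : ℂ) * ((starRingEnd ℂ) (plus p)
              * (Matrix.vecMulVec plus (star plus)) p q * plus q)
            + ((y : ℝ) : ℂ) * ((starRingEnd ℂ) (plus p)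
              * (1 : Matrix (Fin dA × Fin dB) (Fin dA × Fin dB) ℂ) p q * plus q) := by
        intro p q
        simp only [Matrix.add_apply, Matrix.smul_apply, smul_eq_mul]
        ring
      simp only [hentry, Finset.sum_add_distrib, ← Finset.mul_sum]
      rw [functional_pure, functional_one]
      simp only [hSplus]
      ring
    have hE1 : ∑ i, c i * ‖t i‖ ^ 2 = (1 - ε) + y := by
      have h := hS1dec.symm.trans hS1rho
      exact_mod_cast h
    -- the corner-projector functional
    set S2 : ℂ := ∑ p : Fin dA × Fin dB,
      (if ((p.1:ℕ) < r ∧ (p.2:ℕ) < r) then ρ p p else 0) with hS2_def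
    have hS2dec : S2 = ((∑ i, c i * Q i : ℝ) : ℂ) := by
      rw [hS2_def]
      simp only [hρ_entry]
      have hswap : ∀ p : Fin dA × Fin dB, (if ((p.1:ℕ) < r ∧ (p.2:ℕ) < r)
          then (∑ i, (c i:ℂ) * (v i p * (starRingEnd ℂ) (v i p))) else 0)
          = ∑ i, (c i:ℂ) *
              (if ((p.1:ℕ) < r ∧ (p.2:ℕ) < r) then ((‖v i p‖^2 : ℝ):ℂ) else 0) := by
        intro p
        by_cases h : ((p.1:ℕ) < r ∧ (p.2:ℕ) < r)
        · simp only [if_pos h]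
          refine Finset.sum_congr rfl fun i _ => ?_
          rw [Complex.mul_conj']
          norm_cast
        · simp [if_neg h]
      simp only [hswap]
      rw [Finset.sum_comm]
      have step : ∀ i : Fin n, (∑ p : Fin dA × Fin dB, (c i:ℂ) *
          (if ((p.1:ℕ) < r ∧ (p.2:ℕ) < r) then ((‖v i p‖^2 : ℝ):ℂ) else 0))
          = (c i:ℂ) * ((Q i : ℝ):ℂ) := by
        intro i
        rw [← Finset.mul_sum]
        congr 1
        rw [sum_box_ite hra hrb (fun p => ((‖v i p‖^2 : ℝ):ℂ)), hQ_def]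
        norm_cast
      rw [Finset.sum_congr rfl fun i _ => step i]
      norm_cast
    have hS2rho : S2 = ((1 - ε : ℝ) : ℂ) + ((y : ℝ) : ℂ) * ((r:ℂ) * r) := by
      rw [hS2_def, hρ]
      have hentry : ∀ p : Fin dA × Fin dB,
          (if ((p.1:ℕ) < r ∧ (p.2:ℕ) < r)
            then ((((1 - ε : ℝ) : ℂ) • Matrix.vecMulVec plus (star plus)
              + ((y : ℝ) : ℂ) • (1 : Matrix (Fin dA × Fin dB) (Fin dA × Fin dB) ℂ)) p p) else 0)
          = ((1 - ε : ℝ) : ℂ) * (if ((p.1:ℕ) < r ∧ (p.2:ℕ) < r)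
              then (Matrix.vecMulVec plus (star plus)) p p else 0)
            + ((y : ℝ) : ℂ) * (if ((p.1:ℕ) < r ∧ (p.2:ℕ) < r)
              then (1 : Matrix (Fin dA × Fin dB) (Fin dA × Fin dB) ℂ) p p else 0) := by
        intro p
        by_cases h : ((p.1:ℕ) < r ∧ (p.2:ℕ) < r)
        · simp only [if_pos h, Matrix.add_apply, Matrix.smul_apply, smul_eq_mul]
        · simp [if_neg h]
      simp only [hentry, Finset.sum_add_distrib, ← Finset.mul_sum]
      have hfirst : (∑ p : Fin dA × Fin dB, (if ((p.1:ℕ) < r ∧ (p.2:ℕ) < r)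
          then (Matrix.vecMulVec plus (star plus)) p p else 0)) = 1 := by
        have hpt : ∀ p : Fin dA × Fin dB, (if ((p.1:ℕ) < r ∧ (p.2:ℕ) < r)
            then (Matrix.vecMulVec plus (star plus)) p p else 0)
            = (if ((p.1:ℕ)=(p.2:ℕ) ∧ (p.1:ℕ)<r) then ((1/(r:ℝ) : ℝ):ℂ) else 0) := by
          intro p
          simp only [Matrix.vecMulVec_apply, Pi.star_apply, Complex.star_def]
          by_cases hd : ((p.1:ℕ)=(p.2:ℕ) ∧ (p.1:ℕ) < r)
          · have hb : ((p.1:ℕ) < r ∧ (p.2:ℕ) < r) := ⟨hd.2, hd.1 ▸ hd.2⟩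
            rw [if_pos hb, if_pos hd, hconj_plus]
            simp only [hplus, if_pos hd]
            rw [← Complex.ofReal_mul, h1r]
          · rw [if_neg hd]
            by_cases hb : ((p.1:ℕ) < r ∧ (p.2:ℕ) < r)
            · rw [if_pos hb, hconj_plus]
              simp only [hplus, if_neg hd]
              simp
            · rw [if_neg hb]
        simp only [hpt]
        exact hdiag_const
      have hsecond : (∑ p : Fin dA × Fin dB, (if ((p.1:ℕ) < r ∧ (p.2:ℕ) < r)
          then (1 : Matrix (Fin dA × Fin dB) (Fin dA × Fin dB) ℂ) p p else 0))
          = ((r:ℂ) * r) := by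
        have hpt : ∀ p : Fin dA × Fin dB, (if ((p.1:ℕ) < r ∧ (p.2:ℕ) < r)
            then (1 : Matrix (Fin dA × Fin dB) (Fin dA × Fin dB) ℂ) p p else 0)
            = (if ((p.1:ℕ) < r ∧ (p.2:ℕ) < r) then (1:ℂ) else 0) := by
          intro p
          by_cases h : ((p.1:ℕ) < r ∧ (p.2:ℕ) < r)
          · rw [if_pos h, if_pos h, Matrix.one_apply_eq]
          · rw [if_neg h, if_neg h]
        simp only [hpt]
        rw [sum_box_ite hra hrb (fun _ => (1:ℂ)), Finset.sum_const, Finset.card_univ]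
        simp [Fintype.card_prod]
      rw [hfirst, hsecond, mul_one]
    have hE2 : ∑ i, c i * Q i = (1 - ε) + y * ((r:ℝ) * r) := by
      have h := hS2dec.symm.trans hS2rho
      exact_mod_cast h
    -- summed inequality
    have hglob : (r:ℝ) * ((1-ε) + y) ≤ (m:ℝ) * ((1-ε) + y * ((r:ℝ)*r)) := by
      rw [← hE1, ← hE2, Finset.mul_sum, Finset.mul_sum]
      refine Finset.sum_le_sum fun i _ => ?_
      calc (r:ℝ) * (c i * ‖t i‖ ^ 2) = c i * ((r:ℝ) * ‖t i‖ ^ 2) := by ring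
        _ ≤ c i * ((m:ℝ) * Q i) := mul_le_mul_of_nonneg_left (hper i) (hc i)
        _ = (m:ℝ) * (c i * Q i) := by ring
    -- final arithmetic contradiction
    have hDpos : (0:ℝ) < (dA:ℝ)*(dB:ℝ) := by
      have : 0 < dA * dB := Nat.mul_pos hdA0 hdB0
      exact_mod_cast this
    have hy0 : 0 ≤ y := div_nonneg hε0 hDpos.le
    have hyD : y * ((dA:ℝ)*(dB:ℝ)) = ε := div_mul_cancel₀ ε hDpos.ne'
    have hm1 : (m:ℝ) + 1 ≤ (r:ℝ) := by exact_mod_cast hlt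
    have hr2 : (r:ℝ)*(r:ℝ) ≤ (dA:ℝ) := by exact_mod_cast hrdA
    have habR : (dA:ℝ) ≤ (dB:ℝ) := by exact_mod_cast hdAdB
    have hr1 : (1:ℝ) ≤ (r:ℝ) := by exact_mod_cast hr
    have hrbR : (r:ℝ) ≤ (dB:ℝ) := by exact_mod_cast hrb
    have hdA0R : (0:ℝ) ≤ (dA:ℝ) := by positivity
    have c1 : (1 - ε) ≤ ((r:ℝ) - m) * (1 - ε) := by nlinarith [hm1]
    have c2 : ((r:ℝ) - m) * (1 - ε) ≤ y * ((m:ℝ) * ((r:ℝ)*r) - r) := by nlinarith [hglob]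
    have c3 : y * ((m:ℝ) * ((r:ℝ)*r) - r) ≤ y * ((r:ℝ) * ((r:ℝ)*r)) := by
      refine mul_le_mul_of_nonneg_left ?_ hy0
      nlinarith [hm1, hr1]
    have c4 : y * ((r:ℝ) * ((r:ℝ)*r)) ≤ y * ((r:ℝ) * (dA:ℝ)) := by
      refine mul_le_mul_of_nonneg_left ?_ hy0
      nlinarith [hr2, hr1]
    have c5 : y * ((r:ℝ) * (dA:ℝ)) ≤ y * ((dB:ℝ) * (dA:ℝ)) := by
      refine mul_le_mul_of_nonneg_left ?_ hy0
      nlinarith [hrbR, hdA0R]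
    have c6 : y * ((dB:ℝ) * (dA:ℝ)) = ε := by rw [← hyD]; ring
    linarith
  exact le_antisymm (Nat.sInf_le hmem) (le_csInf ⟨r, hmem⟩ hlow)
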